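/- Let F be a finite field, p a prime different from char(F), and C = C^⊥ ⊆ F^n a self-dual code (with respect to the standard bilinear form ∑_{i=1}^n x_i y_i) invariant under the coordinate permutation σ = (1,…,p)(p+1,…,2p)⋯((t−1)p+1,…,tp) fixing the last f = n − tp coordinates. Let C(σ) be the fixed code of σ and define π_t : C(σ) → F^t by π_t(c) = (c_p, c_{2p}, …, c_{tp}) and π_f : C(σ) → F^f by π_f(c) = (c_{tp+1}, …, c_{tp+f}). Then the code C(σ)* = {(π_t(c), π_f(c)) : c ∈ C(σ)} ⊆ F^{t+f} is self-dual with respect to the nondegenerate symmetric bilinear form b(x,y) = ∑_{i=1}^t p·x_i y_i + ∑_{j=t+1}^{t+f} x_j y_j. -/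

import Mathlib

open Finset

/-- The linear action of a coordinate permutation on `F^n`: `(π x) i = x (π⁻¹ i)`. -/
def permLinear {F : Type*} [Field F] {n : ℕ} (π : Equiv.Perm (Fin n)) :
    (Fin n → F) →ₗ[F] (Fin n → F) where
  toFun x := fun i => x (π⁻¹ i)
  map_add' _ _ := rfl
  map_smul' _ _ := rfl

/-- Vectors that are constant on every cycle of `π`. -/
def constantOnCycles {F : Type*} [Field F] {n : ℕ} (π : Equiv.Perm (Fin n)) :
    Submodule F (Fin n → F) where
  carrier := {x | ∀ i, x (π i) = x i}
  add_mem' := by intro a b ha hb i; simp [ha i, hb i]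
  zero_mem' := fun _ => rfl
  smul_mem' := by intro c x hx i; simp [hx i]

/-- Self-duality with respect to a bilinear form given as a function. -/
def IsSelfDualWith {F : Type*} [Field F] {n : ℕ}
    (B : (Fin n → F) → (Fin n → F) → F) (C : Submodule F (Fin n → F)) : Prop :=
  ∀ x, x ∈ C ↔ ∀ c ∈ C, B x c = 0

/-- The standard bilinear form `∑ i, x i * y i`. -/
def stdB {F : Type*} [Field F] {n : ℕ} (x y : Fin n → F) : F := ∑ i, x i * y i

/-- The projection `c ↦ (π_t(c), π_f(c)) = (c_p, c_{2p}, …, c_{tp}, c_{tp+1}, …, c_{tp+f})`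
(1-based indexing) from `F^(pt+f)` to `F^(t+f)`. -/
def projTF {F : Type*} [Field F] (p t f : ℕ) (hp : 0 < p) :
    (Fin (p * t + f) → F) →ₗ[F] (Fin (t + f) → F) where
  toFun x j :=
    if h : (j : ℕ) < t then
      x ⟨p * (j : ℕ) + (p - 1), by
        have h1 : p * ((j : ℕ) + 1) ≤ p * t := Nat.mul_le_mul_left p h
        have h2 : p * ((j : ℕ) + 1) = p * (j : ℕ) + p := by ring
        omega⟩
    else
      x ⟨p * t + ((j : ℕ) - t), by have := j.isLt; omega⟩
  map_add' x y := by
    funext j; by_cases h : (j : ℕ) < t <;> simp [h]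
  map_smul' c x := by
    funext j; by_cases h : (j : ℕ) < t <;> simp [h]

section Helpers

variable {F : Type*} [Field F] {p t f : ℕ}

lemma mem_constantOnCycles {n : ℕ} (π : Equiv.Perm (Fin n)) (v : Fin n → F) :
    v ∈ constantOnCycles π ↔ ∀ i, v (π i) = v i := Iff.rfl

lemma permLinear_apply {n : ℕ} (π : Equiv.Perm (Fin n)) (x : Fin n → F) (i : Fin n) :
    permLinear (F := F) π x i = x (π⁻¹ i) := rfl

lemma projTF_lt (hp0 : 0 < p) (x : Fin (p * t + f) → F) (j : Fin (t + f))
    (hj : (j : ℕ) < t) (hb : p * (j : ℕ) + (p - 1) < p * t + f) :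
    projTF p t f hp0 x j = x ⟨p * (j : ℕ) + (p - 1), hb⟩ := by
  show dite _ _ _ = _
  rw [dif_pos hj]

lemma projTF_ge (hp0 : 0 < p) (x : Fin (p * t + f) → F) (j : Fin (t + f))
    (hj : ¬ (j : ℕ) < t) (hb : p * t + ((j : ℕ) - t) < p * t + f) :
    projTF p t f hp0 x j = x ⟨p * t + ((j : ℕ) - t), hb⟩ := by
  show dite _ _ _ = _
  rw [dif_neg hj]

variable (σ : Equiv.Perm (Fin (p * t + f)))

lemma sigma_pow (hp : p.Prime)
    (hσ : ∀ i : Fin (p * t + f), (σ i : ℕ) =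
      if (i : ℕ) < p * t then p * ((i : ℕ) / p) + (((i : ℕ) % p + 1) % p)
      else (i : ℕ)) :
    ∀ (m : ℕ) (i : Fin (p * t + f)), ((σ ^ m) i : ℕ) =
      if (i : ℕ) < p * t then p * ((i : ℕ) / p) + (((i : ℕ) % p + m) % p)
      else (i : ℕ) := by
  intro m
  induction m with
  | zero =>
    intro i
    rw [pow_zero]
    split
    · have h1 := Nat.div_add_mod (i : ℕ) p
      have h2 : (i : ℕ) % p < p := Nat.mod_lt _ hp.pos
      have h3 : ((i : ℕ) % p + 0) % p = (i : ℕ) % p := by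
        rw [Nat.add_zero]; exact Nat.mod_eq_of_lt h2
      simp only [Equiv.Perm.one_apply, h3]
      omega
    · simp
  | succ m ih =>
    intro i
    have hstep : (σ ^ (m + 1)) i = σ ((σ ^ m) i) := by
      rw [pow_succ']; rfl
    rw [hstep, hσ]
    have hm := ih i
    by_cases hlt : (i : ℕ) < p * t
    · rw [if_pos hlt] at hm
      have hs : ((i : ℕ) % p + m) % p < p := Nat.mod_lt _ hp.pos
      have hdiv : (i : ℕ) / p < t := Nat.div_lt_of_lt_mul hlt
      have hjlt : ((σ ^ m) i : ℕ) < p * t := by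
        rw [hm]
        have h4 : p * ((i : ℕ) / p + 1) ≤ p * t := Nat.mul_le_mul_left p hdiv
        have h5 : p * ((i : ℕ) / p + 1) = p * ((i : ℕ) / p) + p := by ring
        omega
      rw [if_pos hjlt, if_pos hlt, hm]
      rw [Nat.mul_add_div hp.pos, Nat.mul_add_mod]
      rw [Nat.div_eq_of_lt hs, Nat.mod_eq_of_lt hs, Nat.add_zero]
      congr 1
      rw [show (i : ℕ) % p + (m + 1) = ((i : ℕ) % p + m) + 1 by ring]
      rw [Nat.add_mod ((i : ℕ) % p + m) 1 p, Nat.mod_eq_of_lt hp.one_lt]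
    · rw [if_neg hlt] at hm
      rw [if_neg hlt, hm, if_neg hlt]

lemma const_pow {v : Fin (p * t + f) → F} (hv : v ∈ constantOnCycles σ) :
    ∀ (m : ℕ) (i : Fin (p * t + f)), v ((σ ^ m) i) = v i := by
  intro m
  induction m with
  | zero => intro i; rw [pow_zero]; rfl
  | succ m ih =>
    intro i
    have hstep : (σ ^ (m + 1)) i = σ ((σ ^ m) i) := by rw [pow_succ']; rfl
    rw [hstep, hv ((σ ^ m) i), ih]

lemma const_val_cycle_end (hp : p.Prime)
    (hσ : ∀ i : Fin (p * t + f), (σ i : ℕ) =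
      if (i : ℕ) < p * t then p * ((i : ℕ) / p) + (((i : ℕ) % p + 1) % p)
      else (i : ℕ))
    {v : Fin (p * t + f) → F} (hv : v ∈ constantOnCycles σ)
    (i : Fin (p * t + f)) (hi : (i : ℕ) < p * t)
    (hb : p * ((i : ℕ) / p) + (p - 1) < p * t + f) :
    v i = v ⟨p * ((i : ℕ) / p) + (p - 1), hb⟩ := by
  set m := p - 1 - (i : ℕ) % p with hmdef
  have hmod : (i : ℕ) % p < p := Nat.mod_lt _ hp.pos
  have hm := sigma_pow σ hp hσ m i
  rw [if_pos hi] at hm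
  have hval : ((i : ℕ) % p + m) % p = p - 1 := by
    have : (i : ℕ) % p + m = p - 1 := by omega
    rw [this, Nat.mod_eq_of_lt (by omega)]
  have heq : (σ ^ m) i = ⟨p * ((i : ℕ) / p) + (p - 1), hb⟩ := by
    apply Fin.ext
    rw [hm, hval]
  rw [← heq, const_pow σ hv m i]

lemma sigma_pow_p (hp : p.Prime)
    (hσ : ∀ i : Fin (p * t + f), (σ i : ℕ) =
      if (i : ℕ) < p * t then p * ((i : ℕ) / p) + (((i : ℕ) % p + 1) % p)
      else (i : ℕ))
    (i : Fin (p * t + f)) : (σ ^ p) i = i := by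
  apply Fin.ext
  rw [sigma_pow σ hp hσ p i]
  split
  · have hdm := Nat.div_add_mod (i : ℕ) p
    rw [Nat.add_mod_right, Nat.mod_eq_of_lt (Nat.mod_lt _ hp.pos)]
    omega
  · rfl

/-- lift of a vector in `F^(t+f)` to a cycle-constant vector in `F^(pt+f)`. -/
def liftTF (p t f : ℕ) (x : Fin (t + f) → F) : Fin (p * t + f) → F := fun i =>
  if h : (i : ℕ) < p * t then
    x ⟨(i : ℕ) / p, by have : (i : ℕ) / p < t := Nat.div_lt_of_lt_mul h; omega⟩
  else
    x ⟨t + ((i : ℕ) - p * t), by have := i.isLt; omega⟩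

lemma sum_fin_mul {M : Type*} [AddCommMonoid M] (G : ℕ → M) :
    ∑ i : Fin (p * t), G (i : ℕ) = ∑ j : Fin t, ∑ r : Fin p, G ((r : ℕ) + p * (j : ℕ)) := by
  rw [show (∑ j : Fin t, ∑ r : Fin p, G ((r : ℕ) + p * (j : ℕ)))
      = ∑ x : Fin t × Fin p, G ((x.2 : ℕ) + p * (x.1 : ℕ)) from
    (Fintype.sum_prod_type (f := fun x : Fin t × Fin p => G ((x.2 : ℕ) + p * (x.1 : ℕ)))).symm]
  symm
  apply Fintype.sum_equiv (finProdFinEquiv.trans (finCongr (mul_comm t p)))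
  intro x
  congr 1

lemma stdB_eq_projB (hp : p.Prime)
    (hσ : ∀ i : Fin (p * t + f), (σ i : ℕ) =
      if (i : ℕ) < p * t then p * ((i : ℕ) / p) + (((i : ℕ) % p + 1) % p)
      else (i : ℕ))
    {v w : Fin (p * t + f) → F}
    (hv : v ∈ constantOnCycles σ) (hw : w ∈ constantOnCycles σ) :
    stdB v w = ∑ i : Fin (t + f),
      (if (i : ℕ) < t then (p : F) else 1) *
        projTF p t f hp.pos v i * projTF p t f hp.pos w i := by
  classical
  unfold stdB
  rw [Fin.sum_univ_add (f := fun i => v i * w i)]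
  rw [Fin.sum_univ_add (f := fun i : Fin (t + f) =>
    (if (i : ℕ) < t then (p : F) else 1) *
      projTF p t f hp.pos v i * projTF p t f hp.pos w i)]
  congr 1
  · -- cycle part
    set G : ℕ → F := fun k =>
      if h : p * k + (p - 1) < p * t + f then
        v ⟨p * k + (p - 1), h⟩ * w ⟨p * k + (p - 1), h⟩ else 0 with hG
    have hbound : ∀ k, k < t → p * k + (p - 1) < p * t + f := by
      intro k hk
      have h4 : p * (k + 1) ≤ p * t := Nat.mul_le_mul_left p hk
      have h5 : p * (k + 1) = p * k + p := by ring
      have := hp.pos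
      omega
    have step1 : ∑ i : Fin (p * t), v (Fin.castAdd f i) * w (Fin.castAdd f i)
        = ∑ i : Fin (p * t), G ((i : ℕ) / p) := by
      apply Finset.sum_congr rfl
      intro i _
      have hlt : ((Fin.castAdd f i : Fin (p * t + f)) : ℕ) < p * t := by
        rw [Fin.coe_castAdd]; exact i.isLt
      have hdiv : (i : ℕ) / p < t := Nat.div_lt_of_lt_mul i.isLt
      have hb : p * ((i : ℕ) / p) + (p - 1) < p * t + f := hbound _ hdiv
      rw [hG]
      simp only [Fin.coe_castAdd]
      rw [dif_pos hb]
      exact congrArg₂ (· * ·)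
        (const_val_cycle_end σ hp hσ hv (Fin.castAdd f i) hlt hb)
        (const_val_cycle_end σ hp hσ hw (Fin.castAdd f i) hlt hb)
    rw [step1, sum_fin_mul (fun k => G (k / p))]
    apply Finset.sum_congr rfl
    intro j _
    have hds : ∀ r : Fin p, ((r : ℕ) + p * (j : ℕ)) / p = (j : ℕ) := by
      intro r
      rw [Nat.add_mul_div_left _ _ hp.pos, Nat.div_eq_of_lt r.isLt, Nat.zero_add]
    have : ∑ r : Fin p, G (((r : ℕ) + p * (j : ℕ)) / p) = ∑ _r : Fin p, G (j : ℕ) := by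
      apply Finset.sum_congr rfl
      intro r _
      rw [hds r]
    rw [this, Finset.sum_const, Finset.card_univ, Fintype.card_fin, nsmul_eq_mul]
    have hjc : ((Fin.castAdd f j : Fin (t + f)) : ℕ) = (j : ℕ) := Fin.coe_castAdd _ _
    have hjt : ((Fin.castAdd f j : Fin (t + f)) : ℕ) < t := by rw [hjc]; exact j.isLt
    have hb : p * (j : ℕ) + (p - 1) < p * t + f := hbound _ j.isLt
    rw [if_pos hjt]
    rw [projTF_lt hp.pos v _ hjt (by rw [hjc]; exact hb),
      projTF_lt hp.pos w _ hjt (by rw [hjc]; exact hb)]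
    rw [hG]
    simp only [hjc]
    rw [dif_pos hb, mul_assoc]
  · -- fixed part
    apply Finset.sum_congr rfl
    intro j _
    have hjc : ((Fin.natAdd t j : Fin (t + f)) : ℕ) = t + (j : ℕ) := Fin.coe_natAdd _ _
    have hjt : ¬ ((Fin.natAdd t j : Fin (t + f)) : ℕ) < t := by rw [hjc]; omega
    have hb : p * t + (((Fin.natAdd t j : Fin (t + f)) : ℕ) - t) < p * t + f := by
      rw [hjc]; have := j.isLt; omega
    rw [if_neg hjt, one_mul, projTF_ge hp.pos v _ hjt hb, projTF_ge hp.pos w _ hjt hb]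
    have hidx : (⟨p * t + (((Fin.natAdd t j : Fin (t + f)) : ℕ) - t), hb⟩ : Fin (p * t + f))
        = Fin.natAdd (p * t) j := by
      apply Fin.ext
      show p * t + (((Fin.natAdd t j : Fin (t + f)) : ℕ) - t) = p * t + (j : ℕ)
      rw [hjc]
      omega
    rw [hidx]

lemma liftTF_mem_const (hp : p.Prime)
    (hσ : ∀ i : Fin (p * t + f), (σ i : ℕ) =
      if (i : ℕ) < p * t then p * ((i : ℕ) / p) + (((i : ℕ) % p + 1) % p)
      else (i : ℕ))
    (x : Fin (t + f) → F) : liftTF p t f x ∈ constantOnCycles σ := by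
  intro i
  by_cases h : (i : ℕ) < p * t
  · have hσi := hσ i
    rw [if_pos h] at hσi
    have hs : ((i : ℕ) % p + 1) % p < p := Nat.mod_lt _ hp.pos
    have hdiv : (i : ℕ) / p < t := Nat.div_lt_of_lt_mul h
    have h2 : (σ i : ℕ) < p * t := by
      rw [hσi]
      have h4 : p * ((i : ℕ) / p + 1) ≤ p * t := Nat.mul_le_mul_left p hdiv
      have h5 : p * ((i : ℕ) / p + 1) = p * ((i : ℕ) / p) + p := by ring
      omega
    show dite _ _ _ = dite _ _ _
    rw [dif_pos h2, dif_pos h]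
    congr 1
    apply Fin.ext
    show (σ i : ℕ) / p = (i : ℕ) / p
    rw [hσi, Nat.mul_add_div hp.pos, Nat.div_eq_of_lt hs, Nat.add_zero]
  · have : σ i = i := Fin.ext (by rw [hσ i, if_neg h])
    rw [this]

lemma projTF_liftTF (hp : p.Prime) (x : Fin (t + f) → F) :
    projTF p t f hp.pos (liftTF p t f x) = x := by
  funext j
  by_cases hj : (j : ℕ) < t
  · have hb : p * (j : ℕ) + (p - 1) < p * t + f := by
      have h4 : p * ((j : ℕ) + 1) ≤ p * t := Nat.mul_le_mul_left p hj
      have h5 : p * ((j : ℕ) + 1) = p * (j : ℕ) + p := by ring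
      have := hp.pos
      omega
    rw [projTF_lt hp.pos _ j hj hb]
    have hin : p * (j : ℕ) + (p - 1) < p * t := by
      have h4 : p * ((j : ℕ) + 1) ≤ p * t := Nat.mul_le_mul_left p hj
      have h5 : p * ((j : ℕ) + 1) = p * (j : ℕ) + p := by ring
      have := hp.pos
      omega
    show dite _ _ _ = _
    rw [dif_pos hin]
    congr 1
    apply Fin.ext
    show (p * (j : ℕ) + (p - 1)) / p = (j : ℕ)
    rw [Nat.mul_add_div hp.pos, Nat.div_eq_of_lt (Nat.sub_lt hp.pos Nat.one_pos), Nat.add_zero]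
  · have hb : p * t + ((j : ℕ) - t) < p * t + f := by have := j.isLt; omega
    rw [projTF_ge hp.pos _ j hj hb]
    show dite _ _ _ = _
    rw [dif_neg (by omega : ¬ p * t + ((j : ℕ) - t) < p * t)]
    congr 1
    apply Fin.ext
    show t + (p * t + ((j : ℕ) - t) - p * t) = (j : ℕ)
    omega

lemma permLinear_one {n : ℕ} (c : Fin n → F) : permLinear (F := F) (1 : Equiv.Perm (Fin n)) c = c := by
  funext i
  show c ((1 : Equiv.Perm (Fin n))⁻¹ i) = c i
  rw [inv_one]
  rfl

lemma permLinear_pow_succ {n : ℕ} (π : Equiv.Perm (Fin n)) (k : ℕ) (c : Fin n → F) :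
    permLinear (F := F) (π ^ (k + 1)) c = permLinear π (permLinear (π ^ k) c) := by
  funext i
  show c ((π ^ (k + 1))⁻¹ i) = c ((π ^ k)⁻¹ (π⁻¹ i))
  rw [pow_succ', mul_inv_rev]
  rfl

end Helpers

/-- Let `p ≠ char F` be prime and `C = C^⊥ ⊆ F^(pt+f)` a self-dual code (standard
bilinear form) invariant under the coordinate permutation `σ` with `t` `p`-cycles
`(1,…,p)⋯((t-1)p+1,…,tp)` and `f` fixed points.  Then the projected fixed code
`C(σ)* = {(π_t c, π_f c) : c ∈ C(σ)} ⊆ F^(t+f)` is self-dual with respect to the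
bilinear form `b(x,y) = ∑_{i<t} p·x_i y_i + ∑_{t≤j<t+f} x_j y_j`. -/
theorem projected_fixed_code_self_dual
    {F : Type*} [Field F] [Fintype F] {p t f : ℕ}
    (hp : p.Prime) (hchar : p ≠ ringChar F)
    (σ : Equiv.Perm (Fin (p * t + f)))
    (hσ : ∀ i : Fin (p * t + f), (σ i : ℕ) =
      if (i : ℕ) < p * t then p * ((i : ℕ) / p) + (((i : ℕ) % p + 1) % p)
      else (i : ℕ))
    (C : Submodule F (Fin (p * t + f) → F))
    (hsd : IsSelfDualWith stdB C)
    (hinv : C.map (permLinear σ) = C) :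
    IsSelfDualWith
      (fun x y => ∑ i : Fin (t + f),
        (if (i : ℕ) < t then (p : F) else 1) * x i * y i)
      ((C ⊓ constantOnCycles σ).map (projTF p t f hp.pos)) := by
  classical
  have hpne : (p : F) ≠ 0 := by
    intro h0
    haveI := ringChar.charP F
    have hd : ringChar F ∣ p := (ringChar.spec F p).mp h0
    have hq : (ringChar F).Prime := CharP.char_is_prime F (ringChar F)
    exact hchar ((Nat.prime_dvd_prime_iff_eq hq hp).mp hd).symm
  intro x
  constructor
  · rintro ⟨u, ⟨huC, huc⟩, rfl⟩ c ⟨w, ⟨hwC, hwc⟩, rfl⟩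
    show (∑ i : Fin (t + f), (if (i : ℕ) < t then (p : F) else 1) *
      projTF p t f hp.pos u i * projTF p t f hp.pos w i) = 0
    rw [← stdB_eq_projB σ hp hσ huc hwc]
    exact (hsd u).mp huC w hwC
  · intro hx
    have hvc := liftTF_mem_const σ hp hσ x
    refine ⟨liftTF p t f x, ⟨?_, hvc⟩, projTF_liftTF hp x⟩
    apply (hsd (liftTF p t f x)).mpr
    intro c hcC
    -- averaging operator
    have hmem : ∀ k : ℕ, permLinear (σ ^ k) c ∈ C := by
      intro k
      induction k with
      | zero => rw [pow_zero, permLinear_one]; exact hcC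
      | succ k ih =>
        rw [permLinear_pow_succ]
        rw [← hinv]
        exact Submodule.mem_map_of_mem ih
    set S : Fin (p * t + f) → F := ∑ k ∈ Finset.range p, permLinear (σ ^ k) c with hS
    have hSC : S ∈ C := Submodule.sum_mem C fun k _ => hmem k
    set ec : Fin (p * t + f) → F := (p : F)⁻¹ • S with hec
    have hecC : ec ∈ C := Submodule.smul_mem C _ hSC
    have hSapp : ∀ i, S i = ∑ k ∈ Finset.range p, c ((σ ^ k)⁻¹ i) := by
      intro i
      rw [hS, Finset.sum_apply]
      rfl
    have hecc : ec ∈ constantOnCycles σ := by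
      intro i
      show (p : F)⁻¹ * S (σ i) = (p : F)⁻¹ * S i
      congr 1
      rw [hSapp, hSapp]
      have hrange : Finset.range p = Finset.range ((p - 1) + 1) := by
        rw [Nat.sub_add_cancel hp.one_le]
      rw [hrange, Finset.sum_range_succ' (fun k => c ((σ ^ k)⁻¹ (σ i))) (p - 1),
        Finset.sum_range_succ (fun k => c ((σ ^ k)⁻¹ i)) (p - 1)]
      congr 1
      · apply Finset.sum_congr rfl
        intro k _
        show c ((σ ^ (k + 1))⁻¹ (σ i)) = c ((σ ^ k)⁻¹ i)
        congr 1
        rw [pow_succ', mul_inv_rev]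
        show (σ ^ k)⁻¹ (σ⁻¹ (σ i)) = (σ ^ k)⁻¹ i
        rw [show σ⁻¹ (σ i) = i from σ.symm_apply_apply i]
      · show c ((σ ^ 0)⁻¹ (σ i)) = c ((σ ^ (p - 1))⁻¹ i)
        congr 1
        rw [pow_zero, inv_one]
        show (1 : Equiv.Perm (Fin (p * t + f))) (σ i) = (σ ^ (p - 1))⁻¹ i
        rw [Equiv.Perm.one_apply]
        have hfix : (σ ^ (p - 1)) (σ i) = i := by
          calc (σ ^ (p - 1)) (σ i) = ((σ ^ (p - 1)) * σ) i := rfl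
            _ = (σ ^ ((p - 1) + 1)) i := by rw [pow_succ]
            _ = (σ ^ p) i := by rw [Nat.sub_add_cancel hp.one_le]
            _ = i := sigma_pow_p σ hp hσ i
        apply (σ ^ (p - 1)).injective
        rw [show (σ ^ (p - 1)) ((σ ^ (p - 1))⁻¹ i) = i from (σ ^ (p - 1)).apply_symm_apply i]
        exact hfix
    -- stdB (lift x) c = stdB (lift x) ec
    have hterm : ∀ k : ℕ,
        (∑ i, liftTF p t f x i * c ((σ ^ k)⁻¹ i)) = stdB (liftTF p t f x) c := by
      intro k
      calc (∑ i, liftTF p t f x i * c ((σ ^ k)⁻¹ i))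
          = ∑ i, (fun j => liftTF p t f x j * c ((σ ^ k)⁻¹ j)) ((σ ^ k) i) :=
            (Equiv.sum_comp (σ ^ k) _).symm
        _ = ∑ i, liftTF p t f x i * c i := by
            apply Finset.sum_congr rfl
            intro i _
            show liftTF p t f x ((σ ^ k) i) * c ((σ ^ k)⁻¹ ((σ ^ k) i))
              = liftTF p t f x i * c i
            rw [show (σ ^ k)⁻¹ ((σ ^ k) i) = i from (σ ^ k).symm_apply_apply i, const_pow σ hvc k i]
        _ = stdB (liftTF p t f x) c := rfl
    have hstd : stdB (liftTF p t f x) ec = stdB (liftTF p t f x) c := by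
      calc stdB (liftTF p t f x) ec
          = ∑ i, liftTF p t f x i * ((p : F)⁻¹ * S i) := rfl
        _ = (p : F)⁻¹ * ∑ i, liftTF p t f x i * S i := by
            rw [Finset.mul_sum]
            apply Finset.sum_congr rfl
            intro i _
            ring
        _ = (p : F)⁻¹ * ∑ i, ∑ k ∈ Finset.range p, liftTF p t f x i * c ((σ ^ k)⁻¹ i) := by
            congr 1
            apply Finset.sum_congr rfl
            intro i _
            rw [hSapp, Finset.mul_sum]
        _ = (p : F)⁻¹ * ∑ k ∈ Finset.range p, ∑ i, liftTF p t f x i * c ((σ ^ k)⁻¹ i) := by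
            rw [Finset.sum_comm]
        _ = (p : F)⁻¹ * ∑ _k ∈ Finset.range p, stdB (liftTF p t f x) c := by
            congr 1
            exact Finset.sum_congr rfl fun k _ => hterm k
        _ = (p : F)⁻¹ * ((p : F) * stdB (liftTF p t f x) c) := by
            rw [Finset.sum_const, Finset.card_range, nsmul_eq_mul]
        _ = stdB (liftTF p t f x) c := by
            rw [← mul_assoc, inv_mul_cancel₀ hpne, one_mul]
    rw [← hstd, stdB_eq_projB σ hp hσ hvc hecc, projTF_liftTF hp x]
    exact hx (projTF p t f hp.pos ec) ⟨ec, ⟨hecC, hecc⟩, rfl⟩
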